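/- Let C be a nonempty finite set, let W : C → ℝ satisfy W(c) ≠ 0 for every c ∈ C and ∑_{c∈C} W(c) > 0, and let W_v : C → ℝ satisfy W_v(c) > 0 for all c. If equality holds in the negativity bound, i.e. (∑_{c} W(c)²/W_v(c)) · (∑_{c} W_v(c)) = (∑_{c} |W(c)|)², then there exists t > 0 such that W_v(c) = t·|W(c)| for all c ∈ C. Hence, up to an overall positive scale, the stoquastic choice W_v = |W| is the unique optimal virtual weight. -/

import Mathlib

open Finset
open scoped RealInnerProductSpace

/-- **Uniqueness of the optimal virtual weights.** If equality holds in the negativity bound,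
then the virtual weights are a positive multiple of `|W|`. -/
theorem negativity_eq_iff_stoquastic {C : Type*} [Fintype C] [Nonempty C]
    (W Wv : C → ℝ) (hWne : ∀ c, W c ≠ 0) (hW : 0 < ∑ c, W c) (hWv : ∀ c, 0 < Wv c)
    (heq : (∑ c, (W c) ^ 2 / Wv c) * (∑ c, Wv c) = (∑ c, |W c|) ^ 2) :
    ∃ t : ℝ, 0 < t ∧ ∀ c, Wv c = t * |W c| := by
  classical
  set x : EuclideanSpace ℝ C := WithLp.toLp 2 (fun c => |W c| / Real.sqrt (Wv c)) with hx
  set y : EuclideanSpace ℝ C := WithLp.toLp 2 (fun c => Real.sqrt (Wv c)) with hy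
  have hsqpos : ∀ c, 0 < Real.sqrt (Wv c) := fun c => Real.sqrt_pos.2 (hWv c)
  have hsq : ∀ c, Real.sqrt (Wv c) * Real.sqrt (Wv c) = Wv c :=
    fun c => Real.mul_self_sqrt (hWv c).le
  have hinner : ⟪x, y⟫ = ∑ c, |W c| := by
    rw [PiLp.inner_apply]
    refine Finset.sum_congr rfl fun c _ => ?_
    simp only [RCLike.inner_apply, starRingEnd_apply, star_trivial, hx, hy]
    rw [mul_comm, div_mul_cancel₀ _ (hsqpos c).ne']
  have hnx : ‖x‖ ^ 2 = ∑ c, (W c) ^ 2 / Wv c := by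
    rw [← real_inner_self_eq_norm_sq, PiLp.inner_apply]
    refine Finset.sum_congr rfl fun c _ => ?_
    simp only [RCLike.inner_apply, starRingEnd_apply, star_trivial, hx]
    rw [div_mul_div_comm, hsq c, abs_mul_abs_self, ← sq]
  have hny : ‖y‖ ^ 2 = ∑ c, Wv c := by
    rw [← real_inner_self_eq_norm_sq, PiLp.inner_apply]
    refine Finset.sum_congr rfl fun c _ => ?_
    simp only [RCLike.inner_apply, starRingEnd_apply, star_trivial, hy]
    exact hsq c
  have hinnerpos : 0 < ⟪x, y⟫ := by
    rw [hinner]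
    calc 0 < ∑ c, W c := hW
    _ ≤ ∑ c, |W c| := Finset.sum_le_sum fun c _ => le_abs_self _
  have hprod : ⟪x, y⟫ ^ 2 = (‖x‖ * ‖y‖) ^ 2 := by
    rw [hinner, mul_pow, hnx, hny, heq]
  have hie : ⟪x, y⟫ = ‖x‖ * ‖y‖ := by
    nlinarith [norm_nonneg x, norm_nonneg y, hinnerpos, mul_nonneg (norm_nonneg x) (norm_nonneg y)]
  have hdep := inner_eq_norm_mul_iff_real.mp hie
  have hnxpos : 0 < ‖x‖ := by
    rcases lt_or_eq_of_le (norm_nonneg x) with h | h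
    · exact h
    · exfalso
      have : ⟪x, y⟫ = 0 := by rw [hie, ← h, zero_mul]
      linarith
  have hnypos : 0 < ‖y‖ := by
    rcases lt_or_eq_of_le (norm_nonneg y) with h | h
    · exact h
    · exfalso
      have : ⟪x, y⟫ = 0 := by rw [hie, ← h, mul_zero]
      linarith
  refine ⟨‖y‖ / ‖x‖, div_pos hnypos hnxpos, fun c => ?_⟩
  have h1 : ‖y‖ * x c = ‖x‖ * y c := congrFun (congrArg (fun v => (v.ofLp : C → ℝ)) hdep) c
  simp only [hx, hy, WithLp.ofLp_toLp] at h1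
  have h2 : ‖y‖ * |W c| = ‖x‖ * (Real.sqrt (Wv c) * Real.sqrt (Wv c)) := by
    have := congrArg (· * Real.sqrt (Wv c)) h1
    rw [mul_assoc, mul_assoc] at this
    rwa [div_mul_cancel₀ _ (hsqpos c).ne'] at this
  rw [hsq c] at h2
  field_simp
  linarith
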